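/- Fix integers 1 ≤ ℓ < k with (k−ℓ) | n, fix ε ∈ (0,1), and suppose 0 ≤ p ≤ (1−ε)·e^{k−ℓ}/n^{k−ℓ}. Then the expected number X of hamperms of H_{n,p}^{(k)} satisfies E(X) = n!·p^{n/(k−ℓ)} ≤ 3√n · (n·p^{1/(k−ℓ)}/e)^n ≤ 3√n · (1−ε)^{n/(k−ℓ)}; in particular E(X) → 0 as n → ∞, so by Markov's inequality Pr(X > 0) → 0. -/

import Mathlib

open MeasureTheory Finset Filter Topology

/-- The sample space of the random `k`-uniform hypergraph on vertex set `Fin n`: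
a Boolean indicator for each `k`-element subset of the vertices. -/
abbrev HGraph (n k : ℕ) := {e : Finset (Fin n) // e.card = k} → Bool

/-- The distribution of `H_{n,p}^{(k)}`: the product over all `k`-subsets of
independent Bernoulli(p) coordinates. -/
noncomputable def hyperMeasure (n k : ℕ) (p : ℝ) : Measure (HGraph n k) :=
  Measure.pi fun _ => (PMF.bernoulli (min 1 (Real.toNNReal p)) (min_le_left _ _)).toMeasure

/-- `e` is an edge of the hypergraph `ω`. -/
def isEdge {n k : ℕ} (ω : HGraph n k) (e : Finset (Fin n)) : Prop :=
  ∃ h : e.card = k, ω ⟨e, h⟩ = true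

/-- The vertex of `Fin n` with index `a` modulo `n` (as a singleton finset, empty if `n = 0`). -/
def cvtx (n a : ℕ) : Finset (Fin n) :=
  if h : 0 < n then {⟨a % n, Nat.mod_lt a h⟩} else ∅

/-- The `i`-th edge `E_π(i) = {π(i·g + j) : j < k}` (positions mod `n`) of the cycle induced by
the permutation `π`, where `g = k - ℓ`. -/
def cycEdge (n k g : ℕ) (π : Equiv.Perm (Fin n)) (i : ℕ) : Finset (Fin n) :=
  (Finset.range k).biUnion fun j => (cvtx n (i * g + j)).image π

/-- `π` is an `ℓ`-overlapping Hamilton cycle inducing permutation for `ω`. -/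
def Hamperm (n k l : ℕ) (ω : HGraph n k) (π : Equiv.Perm (Fin n)) : Prop :=
  ∀ i < n / (k - l), isEdge ω (cycEdge n k (k - l) π i)

/-- `ω` contains an `ℓ`-overlapping Hamilton cycle. -/
def IsEllHamiltonian (n k l : ℕ) (ω : HGraph n k) : Prop :=
  ∃ π : Equiv.Perm (Fin n), Hamperm n k l ω π
/-- The number of hamperms of `ω` (the random variable `X`), as a real number. -/
noncomputable def countHamperms (n k l : ℕ) (ω : HGraph n k) : ℝ :=
  (Nat.card {π : Equiv.Perm (Fin n) // Hamperm n k l ω π} : ℝ)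


lemma stirling_bound (n : ℕ) (hn : 1 ≤ n) :
    (Nat.factorial n : ℝ) ≤ 3 * Real.sqrt n * ((n : ℝ) / Real.exp 1) ^ n := by
  obtain ⟨m, rfl⟩ := Nat.exists_eq_succ_of_ne_zero (by omega : n ≠ 0)
  set n := m + 1 with hn'
  have hpos : (0:ℝ) < Real.sqrt (2 * n) * ((n : ℝ) / Real.exp 1) ^ n := by
    have : (0:ℝ) < (n:ℝ) := by positivity
    positivity
  have h1 : Stirling.stirlingSeq n ≤ Real.exp 1 / Real.sqrt 2 := by
    have := Stirling.log_stirlingSeq'_antitone (Nat.zero_le m)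
    simp only [Function.comp_apply, Nat.succ_eq_add_one] at this
    have h2 := Stirling.stirlingSeq'_pos m
    have h3 := Stirling.stirlingSeq'_pos 0
    rw [Real.log_le_log_iff h2 h3] at this
    simpa [hn', Stirling.stirlingSeq_one] using this
  rw [Stirling.stirlingSeq, div_le_iff₀ hpos] at h1
  calc (Nat.factorial n : ℝ) ≤ Real.exp 1 / Real.sqrt 2 * (Real.sqrt (2 * n) * ((n:ℝ)/Real.exp 1)^n) := h1
    _ = Real.exp 1 * Real.sqrt n * ((n:ℝ)/Real.exp 1)^n := by
        rw [show (2:ℝ) * n = 2 * n by ring, Real.sqrt_mul (by norm_num : (0:ℝ) ≤ 2)]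
        have : Real.sqrt 2 ≠ 0 := by positivity
        field_simp
    _ ≤ 3 * Real.sqrt n * ((n:ℝ)/Real.exp 1)^n := by
        have he : Real.exp 1 ≤ 3 := by
          have := Real.exp_one_lt_d9; linarith
        have h4 : (0:ℝ) ≤ Real.sqrt n * ((n:ℝ)/Real.exp 1)^n := by positivity
        nlinarith [h4, he]


lemma rpow_div_pow {p : ℝ} (hp : 0 ≤ p) {g n : ℕ} (hg : 0 < g) (hd : g ∣ n) :
    (p ^ ((1:ℝ)/(g:ℝ))) ^ n = p ^ (n / g) := by
  rw [← Real.rpow_natCast (p ^ ((1:ℝ)/(g:ℝ))) n, ← Real.rpow_mul hp,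
    ← Real.rpow_natCast p (n / g)]
  congr 1
  rw [Nat.cast_div hd (by positivity : (g:ℝ) ≠ 0)]
  field_simp

lemma sqrt_le_nat (n : ℕ) : Real.sqrt n ≤ (n : ℝ) := by
  rcases Nat.eq_zero_or_pos n with h | h
  · simp [h]
  · have h2 : Real.sqrt (n:ℝ) ≤ Real.sqrt ((n:ℝ)^2) := by
      apply Real.sqrt_le_sqrt
      have : (1:ℝ) ≤ n := by exact_mod_cast h
      nlinarith
    rwa [Real.sqrt_sq (by positivity)] at h2

lemma real_tendsto_aux {c : ℝ} (h0 : 0 ≤ c) (h1 : c < 1) :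
    Tendsto (fun n : ℕ => 3 * Real.sqrt n * c ^ n) atTop (𝓝 0) := by
  have h := (tendsto_pow_const_mul_const_pow_of_lt_one 1 h0 h1).const_mul 3
  rw [mul_zero] at h
  apply squeeze_zero (fun n => by positivity) (g := fun n : ℕ => 3 * ((n:ℝ) ^ 1 * c ^ n)) _ h
  intro n
  have hc : (0:ℝ) ≤ c ^ n := by positivity
  have h2 := mul_le_mul_of_nonneg_right (sqrt_le_nat n) hc
  simp only [pow_one]
  linarith

lemma base_ineq {g : ℕ} (hg : 0 < g) {n : ℕ} (hn3 : 3 ≤ n) {ε pn : ℝ} (hε1 : ε < 1)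
    (hε0 : 0 < ε) (hp0 : 0 ≤ pn)
    (hpu : pn ≤ (1 - ε) * Real.exp 1 ^ g / (n : ℝ) ^ g) :
    (n : ℝ) * pn ^ ((1:ℝ)/(g:ℝ)) / Real.exp 1 ≤ (1 - ε) ^ ((1:ℝ)/(g:ℝ)) := by
  have hnpos : (0:ℝ) < n := by positivity
  have hε : (0:ℝ) ≤ 1 - ε := by linarith
  have hrw : ((1 - ε) * Real.exp 1 ^ g / (n : ℝ) ^ g) ^ ((1:ℝ)/(g:ℝ))
      = (1 - ε) ^ ((1:ℝ)/(g:ℝ)) * Real.exp 1 / n := by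
    rw [Real.div_rpow (by positivity) (by positivity),
      Real.mul_rpow hε (by positivity)]
    rw [← Real.rpow_natCast (Real.exp 1) g, ← Real.rpow_mul (Real.exp_pos 1).le,
      ← Real.rpow_natCast (n:ℝ) g, ← Real.rpow_mul hnpos.le]
    rw [mul_one_div_cancel (by positivity : (g:ℝ) ≠ 0), Real.rpow_one, Real.rpow_one]
  have h1 : pn ^ ((1:ℝ)/(g:ℝ)) ≤ (1 - ε) ^ ((1:ℝ)/(g:ℝ)) * Real.exp 1 / n := by
    rw [← hrw]
    exact Real.rpow_le_rpow hp0 hpu (by positivity)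
  rw [div_le_iff₀ (Real.exp_pos 1)]
  calc (n:ℝ) * pn ^ ((1:ℝ)/(g:ℝ)) ≤ (n:ℝ) * ((1 - ε) ^ ((1:ℝ)/(g:ℝ)) * Real.exp 1 / n) :=
        mul_le_mul_of_nonneg_left h1 hnpos.le
    _ = (1 - ε) ^ ((1:ℝ)/(g:ℝ)) * Real.exp 1 := by field_simp

lemma mem_cycEdge {n k g : ℕ} (hn : 0 < n) (π : Equiv.Perm (Fin n)) (i : ℕ) (x : Fin n) :
    x ∈ cycEdge n k g π i ↔ ∃ j < k, x = π ⟨(i * g + j) % n, Nat.mod_lt _ hn⟩ := by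
  simp [cycEdge, cvtx, hn, eq_comm]

lemma window_start_unique {n k : ℕ} (hk : 0 < k) (hkn : k < n) (s s' : ℕ)
    (hs : s < n) (hs' : s' < n)
    (h : ∀ x, x < n → ((∃ j < k, x = (s + j) % n) ↔ (∃ j < k, x = (s' + j) % n))) :
    s = s' := by
  have hn : 0 < n := by omega
  obtain ⟨j₀, hj₀k, hj₀⟩ := (h (s % n) (Nat.mod_lt _ hn)).1 ⟨0, hk, by simp⟩
  rcases Nat.eq_zero_or_pos j₀ with h0 | hpos
  · subst h0
    rw [Nat.mod_eq_of_lt hs, Nat.add_zero, Nat.mod_eq_of_lt hs'] at hj₀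
    exact hj₀
  · exfalso
    have hmod : s ≡ s' + j₀ [MOD n] := by
      unfold Nat.ModEq; rw [Nat.mod_eq_of_lt hs]; rw [Nat.mod_eq_of_lt hs] at hj₀; exact hj₀
    have k1 : s + (n - 1) ≡ s' + j₀ + (n - 1) [MOD n] := hmod.add_right _
    have k2 : s' + j₀ + (n - 1) = s' + (j₀ - 1) + n := by omega
    have k3 : s' + (j₀ - 1) + n ≡ s' + (j₀ - 1) [MOD n] := by
      unfold Nat.ModEq; exact Nat.add_mod_right _ _
    have key : (s + (n - 1)) % n = (s' + (j₀ - 1)) % n := k1.trans (k2 ▸ k3)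
    obtain ⟨j, hjk, hj⟩ := (h ((s + (n - 1)) % n) (Nat.mod_lt _ hn)).2 ⟨j₀ - 1, by omega, key⟩
    have hc : (n - 1) ≡ j [MOD n] := Nat.ModEq.add_left_cancel' s hj
    have : (n - 1) % n = j % n := hc
    rw [Nat.mod_eq_of_lt (by omega), Nat.mod_eq_of_lt (by omega)] at this
    omega

lemma cycEdge_card {n k g : ℕ} (hkn : k < n) (π : Equiv.Perm (Fin n)) (i : ℕ) :
    (cycEdge n k g π i).card = k := by
  have hn : 0 < n := by omega
  have : cycEdge n k g π i =
      (range k).image (fun j => π ⟨(i * g + j) % n, Nat.mod_lt _ hn⟩) := by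
    ext x; simp [mem_cycEdge hn, eq_comm]
  rw [this, card_image_of_injOn, card_range]
  intro a ha b hb hab
  simp only [coe_range, Set.mem_Iio] at ha hb
  have h2 : (i * g + a) % n = (i * g + b) % n := congrArg Fin.val (π.injective hab)
  have h3 : a % n = b % n := Nat.ModEq.add_left_cancel' _ h2
  rwa [Nat.mod_eq_of_lt (by omega), Nat.mod_eq_of_lt (by omega)] at h3

lemma cycEdge_inj {n k g : ℕ} (hk : 0 < k) (hkn : k < n) (hg : 0 < g)
    (π : Equiv.Perm (Fin n)) {i i' : ℕ}
    (hi : i * g < n) (hi' : i' * g < n) (h : cycEdge n k g π i = cycEdge n k g π i') :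
    i = i' := by
  have hn : 0 < n := by omega
  have hw : ∀ x, x < n → ((∃ j < k, x = (i * g + j) % n) ↔ (∃ j < k, x = (i' * g + j) % n)) := by
    intro x hx
    have e1 : ∀ (m : ℕ), (∃ j < k, x = (m * g + j) % n) ↔
        π ⟨x, hx⟩ ∈ cycEdge n k g π m := by
      intro m
      rw [mem_cycEdge hn]
      constructor
      · rintro ⟨j, hj, rfl⟩; exact ⟨j, hj, rfl⟩
      · rintro ⟨j, hj, he⟩
        exact ⟨j, hj, congrArg Fin.val (π.injective he)⟩
    rw [e1 i, e1 i', h]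
  have := window_start_unique hk hkn (i * g) (i' * g) hi hi' hw
  exact Nat.eq_of_mul_eq_mul_right hg this
instance (n k : ℕ) (p : ℝ) : IsProbabilityMeasure (hyperMeasure n k p) := by
  unfold hyperMeasure; infer_instance

lemma measure_cylinder {n k : ℕ} (p : ℝ) (hp1 : p ≤ 1)
    (S : Finset {e : Finset (Fin n) // e.card = k}) :
    hyperMeasure n k p {ω | ∀ e ∈ S, ω e = true} = ENNReal.ofReal p ^ S.card := by
  have hq : min 1 (Real.toNNReal p) = Real.toNNReal p := by
    rw [min_eq_right]; exact Real.toNNReal_le_one.2 hp1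
  have hset : {ω : HGraph n k | ∀ e ∈ S, ω e = true} =
      Set.pi Set.univ (fun e => if e ∈ S then {true} else (Set.univ : Set Bool)) := by
    ext ω
    simp only [Set.mem_setOf_eq, Set.mem_pi, Set.mem_univ, forall_true_left]
    constructor
    · intro h e
      by_cases he : e ∈ S <;> simp [he, h]
    · intro h e he
      have := h e; simp only [he, if_true, Set.mem_singleton_iff] at this; exact this
  rw [hyperMeasure, hset, Measure.pi_pi]
  calc ∏ e : {e : Finset (Fin n) // e.card = k},
        (PMF.bernoulli (min 1 (Real.toNNReal p)) (min_le_left _ _)).toMeasure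
          (if e ∈ S then {true} else Set.univ)
      = ∏ e : {e : Finset (Fin n) // e.card = k},
          (if e ∈ S then ENNReal.ofReal p else 1) := by
        apply Finset.prod_congr rfl
        intro e _
        by_cases he : e ∈ S
        · simp only [he, if_true]
          rw [PMF.toMeasure_apply_singleton _ _ (measurableSet_singleton _)]
          simp [PMF.bernoulli_apply, hq, ENNReal.ofReal]
        · simp only [he, if_false]
          exact measure_univ
    _ = ENNReal.ofReal p ^ S.card := by
        rw [Finset.prod_ite_mem, Finset.univ_inter, Finset.prod_const]

lemma lt_of_lt_div {g n i : ℕ} (hg : 0 < g) (h : i < n / g) : i * g < n := by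
  have h1 : (i + 1) * g ≤ (n / g) * g := Nat.mul_le_mul_right g h
  have h2 : (n / g) * g ≤ n := Nat.div_mul_le_self n g
  have h3 : i * g + g = (i + 1) * g := by ring
  omega

lemma hamperm_iff {n k l : ℕ} (hkn : k < n) (ω : HGraph n k) (π : Equiv.Perm (Fin n)) :
    Hamperm n k l ω π ↔ ∀ e ∈ (range (n / (k - l))).image
      (fun i => (⟨cycEdge n k (k - l) π i, cycEdge_card hkn π i⟩ :
        {e : Finset (Fin n) // e.card = k})), ω e = true := by
  rw [Finset.forall_mem_image]
  constructor
  · intro h i hi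
    obtain ⟨hc, hw⟩ := h i (mem_range.mp hi)
    exact hw
  · intro h i hi
    exact ⟨_, h (x := i) (mem_range.mpr hi)⟩

lemma measure_hamperm {n k l : ℕ} (hl : 1 ≤ l) (hlk : l < k) (hkn : k < n)
    (p : ℝ) (hp1 : p ≤ 1) (π : Equiv.Perm (Fin n)) :
    hyperMeasure n k p {ω | Hamperm n k l ω π} = ENNReal.ofReal p ^ (n / (k - l)) := by
  have hset : {ω : HGraph n k | Hamperm n k l ω π}
      = {ω | ∀ e ∈ (range (n / (k - l))).image
          (fun i => (⟨cycEdge n k (k - l) π i, cycEdge_card hkn π i⟩ :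
            {e : Finset (Fin n) // e.card = k})), ω e = true} := by
    ext ω; exact hamperm_iff hkn ω π
  rw [hset, measure_cylinder p hp1]
  congr 1
  rw [card_image_of_injOn, card_range]
  intro i hi j hj hij
  simp only [coe_range, Set.mem_Iio] at hi hj
  have hc : cycEdge n k (k - l) π i = cycEdge n k (k - l) π j :=
    congrArg Subtype.val hij
  exact cycEdge_inj (by omega) hkn (by omega) π
    (lt_of_lt_div (by omega) hi) (lt_of_lt_div (by omega) hj) hc

lemma expectation_eq {n k l : ℕ} (hl : 1 ≤ l) (hlk : l < k) (hkn : k < n)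
    (p : ℝ) (hp0 : 0 ≤ p) (hp1 : p ≤ 1) :
    ∫ ω, countHamperms n k l ω ∂hyperMeasure n k p
      = (Nat.factorial n : ℝ) * p ^ (n / (k - l)) := by
  classical
  have hcount : ∀ ω, countHamperms n k l ω
      = ∑ π : Equiv.Perm (Fin n),
          Set.indicator {ω' | Hamperm n k l ω' π} (fun _ => (1:ℝ)) ω := by
    intro ω
    rw [countHamperms, Nat.card_eq_fintype_card, Fintype.card_subtype, Finset.card_filter]
    push_cast
    apply Finset.sum_congr rfl
    intro π _
    by_cases h : Hamperm n k l ω π <;> simp [Set.indicator_apply, h]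
  have hmeas : ∀ π : Equiv.Perm (Fin n),
      MeasurableSet {ω' : HGraph n k | Hamperm n k l ω' π} :=
    fun π => (Set.toFinite _).measurableSet
  simp only [hcount]
  rw [integral_finset_sum _ (fun π _ => (integrable_const (1:ℝ)).indicator (hmeas π))]
  have hval : ∀ π : Equiv.Perm (Fin n),
      ∫ ω, Set.indicator {ω' | Hamperm n k l ω' π} (fun _ => (1:ℝ)) ω ∂hyperMeasure n k p
        = p ^ (n / (k - l)) := by
    intro π
    rw [show (fun _ : HGraph n k => (1:ℝ)) = 1 from rfl, integral_indicator_one (hmeas π), measureReal_def,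
      measure_hamperm hl hlk hkn p hp1 π]
    rw [ENNReal.toReal_pow, ENNReal.toReal_ofReal hp0]
  simp only [hval, Finset.sum_const, Finset.card_univ, Fintype.card_perm, Fintype.card_fin,
    nsmul_eq_mul]


/-- For `1 ≤ ℓ < k` with `(k-ℓ) ∣ n`, `ε ∈ (0,1)` and
`0 ≤ p ≤ (1-ε)·e^{k-ℓ}/n^{k-ℓ}`: the expected number of hamperms satisfies
`E(X) = n!·p^{n/(k-ℓ)} ≤ 3√n·(n·p^{1/(k-ℓ)}/e)^n ≤ 3√n·(1-ε)^{n/(k-ℓ)}`; in particular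
`E(X) → 0`, so by Markov's inequality `Pr(X > 0) → 0`. -/
theorem statement_9 (k l : ℕ) (hl : 1 ≤ l) (hlk : l < k)
    (ε : ℝ) (hε0 : 0 < ε) (hε1 : ε < 1)
    (p : ℕ → ℝ) (hp0 : ∀ n, 0 ≤ p n)
    (hpu : ∀ n : ℕ, p n ≤ (1 - ε) * Real.exp 1 ^ (k - l) / (n : ℝ) ^ (k - l)) :
    (∀ n : ℕ, (k - l) ∣ n → k < n →
      (∫ ω, countHamperms n k l ω ∂hyperMeasure n k (p n)) =
          (Nat.factorial n : ℝ) * p n ^ (n / (k - l)) ∧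
      (Nat.factorial n : ℝ) * p n ^ (n / (k - l)) ≤
          3 * Real.sqrt n * ((n : ℝ) * p n ^ ((1 : ℝ) / (k - l)) / Real.exp 1) ^ n ∧
      3 * Real.sqrt n * ((n : ℝ) * p n ^ ((1 : ℝ) / (k - l)) / Real.exp 1) ^ n ≤
          3 * Real.sqrt n * (1 - ε) ^ (n / (k - l))) ∧
    Tendsto (fun n => hyperMeasure n k (p n) {ω | ∃ π, Hamperm n k l ω π})
      (atTop ⊓ 𝓟 {n | (k - l) ∣ n}) (𝓝 0) := by
  have hg : 0 < k - l := by omega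
  have he3 : Real.exp 1 ≤ 3 := by have := Real.exp_one_lt_d9; linarith
  have hε' : (0:ℝ) ≤ 1 - ε := by linarith
  have hp1 : ∀ n : ℕ, 3 ≤ n → p n ≤ 1 := by
    intro n hn
    have h := hpu n
    have hn' : (3:ℝ) ≤ (n:ℝ) := by exact_mod_cast hn
    have h1 : Real.exp 1 ^ (k - l) ≤ (n:ℝ) ^ (k - l) :=
      pow_le_pow_left₀ (Real.exp_pos 1).le (by linarith) _
    have h2 : (1 - ε) * Real.exp 1 ^ (k - l) / (n:ℝ) ^ (k - l) ≤ 1 := by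
      rw [div_le_one (by positivity)]
      have h3 : (1 - ε) * Real.exp 1 ^ (k - l) ≤ Real.exp 1 ^ (k - l) := by
        have := pow_pos (Real.exp_pos 1) (k - l)
        nlinarith
      linarith
    linarith
  have hA : ∀ n : ℕ, (k - l) ∣ n → k < n →
      (∫ ω, countHamperms n k l ω ∂hyperMeasure n k (p n)) =
          (Nat.factorial n : ℝ) * p n ^ (n / (k - l)) ∧
      (Nat.factorial n : ℝ) * p n ^ (n / (k - l)) ≤
          3 * Real.sqrt n * ((n : ℝ) * p n ^ ((1 : ℝ) / (k - l)) / Real.exp 1) ^ n ∧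
      3 * Real.sqrt n * ((n : ℝ) * p n ^ ((1 : ℝ) / (k - l)) / Real.exp 1) ^ n ≤
          3 * Real.sqrt n * (1 - ε) ^ (n / (k - l)) := by
    intro n hd hkn
    have hn3 : 3 ≤ n := by omega
    have hcast : ((k:ℝ) - (l:ℝ)) = ((k - l : ℕ) : ℝ) := by
      rw [Nat.cast_sub hlk.le]
    rw [hcast]
    have hr : (p n ^ ((1:ℝ)/((k - l : ℕ):ℝ))) ^ n = p n ^ (n / (k - l)) :=
      rpow_div_pow (hp0 n) hg hd
    refine ⟨expectation_eq hl hlk hkn (p n) (hp0 n) (hp1 n hn3), ?_, ?_⟩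
    · calc (Nat.factorial n : ℝ) * p n ^ (n / (k - l))
          ≤ (3 * Real.sqrt n * ((n:ℝ) / Real.exp 1) ^ n) * p n ^ (n / (k - l)) :=
            mul_le_mul_of_nonneg_right (stirling_bound n (by omega))
              (pow_nonneg (hp0 n) _)
        _ = 3 * Real.sqrt n * ((n : ℝ) * p n ^ ((1:ℝ)/((k - l : ℕ):ℝ)) / Real.exp 1) ^ n := by
            rw [show (n : ℝ) * p n ^ ((1:ℝ)/((k - l : ℕ):ℝ)) / Real.exp 1
                = ((n:ℝ) / Real.exp 1) * p n ^ ((1:ℝ)/((k - l : ℕ):ℝ)) from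
              mul_div_right_comm _ _ _, mul_pow, hr]
            ring
    · have hb := base_ineq hg hn3 hε1 hε0 (hp0 n) (hpu n)
      have hbn : ((n : ℝ) * p n ^ ((1:ℝ)/((k - l : ℕ):ℝ)) / Real.exp 1) ^ n
          ≤ ((1 - ε) ^ ((1:ℝ)/((k - l : ℕ):ℝ))) ^ n :=
        pow_le_pow_left₀ (div_nonneg (mul_nonneg (Nat.cast_nonneg n)
          (Real.rpow_nonneg (hp0 n) _)) (Real.exp_pos 1).le) hb n
      rw [rpow_div_pow hε' hg hd] at hbn
      exact mul_le_mul_of_nonneg_left hbn (by positivity)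
  refine ⟨hA, ?_⟩
  set c : ℝ := (1 - ε) ^ ((1:ℝ)/((k - l : ℕ):ℝ)) with hcdef
  have hc0 : 0 ≤ c := Real.rpow_nonneg hε' _
  have hc1 : c < 1 := Real.rpow_lt_one hε' (by linarith) (by positivity)
  have htr : Tendsto (fun n : ℕ => ENNReal.ofReal (3 * Real.sqrt n * c ^ n)) atTop (𝓝 0) := by
    have h := ENNReal.tendsto_ofReal (real_tendsto_aux hc0 hc1)
    rwa [ENNReal.ofReal_zero] at h
  refine tendsto_of_tendsto_of_tendsto_of_le_of_le' tendsto_const_nhds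
    (htr.mono_left inf_le_left) (Eventually.of_forall fun n => zero_le) ?_
  have hev1 : ∀ᶠ n : ℕ in atTop ⊓ 𝓟 {n | (k - l) ∣ n}, k < n :=
    (eventually_gt_atTop k).filter_mono inf_le_left
  have hev2 : ∀ᶠ n : ℕ in atTop ⊓ 𝓟 {n | (k - l) ∣ n}, (k - l) ∣ n :=
    eventually_inf_principal.2 (Eventually.of_forall fun n h => h)
  filter_upwards [hev1, hev2] with n hkn hd
  have hn3 : 3 ≤ n := by omega
  have hunion : {ω : HGraph n k | ∃ π, Hamperm n k l ω π}
      = ⋃ π : Equiv.Perm (Fin n), {ω | Hamperm n k l ω π} := by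
    ext ω; simp [Set.mem_iUnion]
  calc hyperMeasure n k (p n) {ω | ∃ π, Hamperm n k l ω π}
      ≤ ∑ π : Equiv.Perm (Fin n), hyperMeasure n k (p n) {ω | Hamperm n k l ω π} := by
        rw [hunion]; exact measure_iUnion_fintype_le _ _
    _ = ∑ _x : Equiv.Perm (Fin n), ENNReal.ofReal (p n) ^ (n / (k - l)) :=
        Finset.sum_congr rfl fun π _ => measure_hamperm hl hlk hkn (p n) (hp1 n hn3) π
    _ = (Nat.factorial n : ENNReal) * ENNReal.ofReal (p n) ^ (n / (k - l)) := by
        rw [Finset.sum_const, Finset.card_univ, Fintype.card_perm, Fintype.card_fin,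
          nsmul_eq_mul]
    _ = ENNReal.ofReal ((Nat.factorial n : ℝ) * p n ^ (n / (k - l))) := by
        rw [ENNReal.ofReal_mul (by positivity), ENNReal.ofReal_natCast,
          ENNReal.ofReal_pow (hp0 n)]
    _ ≤ ENNReal.ofReal (3 * Real.sqrt n * c ^ n) := by
        apply ENNReal.ofReal_le_ofReal
        have h1 := (hA n hd hkn).2.1.trans (hA n hd hkn).2.2
        rwa [hcdef, rpow_div_pow hε' hg hd]
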